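/- arXiv:1908.11014 — 2 statements merged into one kernel-verified Lean document; each statement's English description precedes it below -/
import Mathlib

section
/- Let h : ℕ → [0,∞) be a multiplicative function such that h(p) ≤ 2 and h(p^k) ≤ h(p) for all primes p and all k ≥ 2, and suppose that for some constant c > 0 one has ∑_{p ≤ x} h(p) ≪ √x / exp(c√(log x)). Then there exists δ > 0 such that ∑_{n ≤ x} h(n) ≪ √x / exp(δ√(log x)). -/
set_option maxHeartbeats 1000000

open Finset Real


/-- Sum of `h p` over primes `p ≤ x`. -/
noncomputable def primeSum (h : ℕ → ℝ) (x : ℝ) : ℝ :=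
  ∑ p ∈ (Finset.Icc 1 ⌊x⌋₊).filter Nat.Prime, h p

/-- Partial sums `∑_{n ≤ x} h n`. -/
noncomputable def partialSum (h : ℕ → ℝ) (x : ℝ) : ℝ :=
  ∑ n ∈ Finset.Icc 1 ⌊x⌋₊, h n


private lemma sum_sq_inv_le (n : ℕ) : ∑ j ∈ Finset.range n, (1:ℝ)/((j:ℝ)+1)^2 ≤ 2 := by
  have key : ∀ m : ℕ, ∑ j ∈ Finset.range m, (1:ℝ)/((j:ℝ)+1)^2 ≤ 2 - 2/((m:ℝ)+1) := by
    intro m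
    induction m with
    | zero => norm_num
    | succ k ih =>
      rw [Finset.sum_range_succ]
      have h1 : (0:ℝ) < (k:ℝ) + 1 := by positivity
      have h2 : (0:ℝ) < (k:ℝ) + 2 := by positivity
      have hstep : (1:ℝ)/((k:ℝ)+1)^2 ≤ 2/((k:ℝ)+1) - 2/((k:ℝ)+2) := by
        rw [div_sub_div _ _ (ne_of_gt h1) (ne_of_gt h2), div_le_div_iff₀ (by positivity) (by positivity)]
        nlinarith
      push_cast
      have e : 2 - 2/((k:ℝ)+1+1) = 2 - 2/((k:ℝ)+2) := by ring_nf
      rw [e]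
      linarith
  have hn : (0:ℝ) ≤ 2/((n:ℝ)+1) := by positivity
  linarith [key n]

private lemma geom_sum_le_inv {q : ℝ} (h0 : 0 ≤ q) (h1 : q < 1) (n : ℕ) :
    ∑ j ∈ Finset.range n, q^j ≤ (1-q)⁻¹ := by
  have hq : q ≠ 1 := ne_of_lt h1
  rw [geom_sum_eq hq]
  rw [div_le_iff_of_neg (by linarith : q - 1 < 0)]
  have h2 : (0:ℝ) ≤ q^n := by positivity
  have h3 : (1-q)⁻¹*(q-1) = -1 := by
    rw [inv_mul_eq_div, div_eq_iff (by linarith : (1:ℝ)-q ≠ 0)]; ring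
  linarith

private lemma exp_neg_le_aux {s : ℝ} (hs : 0 < s) : Real.exp (-s) ≤ 256 / s^4 := by
  have h1 : s^4 / 256 ≤ Real.exp s := by
    have h2 : s/4 ≤ Real.exp (s/4) := by
      have := Real.add_one_le_exp (s/4); linarith
    have h3 : (s/4)^4 ≤ (Real.exp (s/4))^4 := pow_le_pow_left₀ (by positivity) h2 4
    have h4 : (Real.exp (s/4))^4 = Real.exp s := by
      rw [← Real.exp_nat_mul]; congr 1; ring
    calc s^4/256 = (s/4)^4 := by ring
      _ ≤ (Real.exp (s/4))^4 := h3
      _ = Real.exp s := h4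
  rw [Real.exp_neg, inv_le_comm₀ (Real.exp_pos s) (by positivity)]
  calc (256 / s^4)⁻¹ = s^4/256 := by rw [inv_div]
    _ ≤ Real.exp s := h1

private lemma map_prod_primes {f : ℕ → ℝ} (hf1 : f 1 = 1)
    (hfm : ∀ m n, Nat.Coprime m n → f (m * n) = f m * f n)
    (s : Finset ℕ) (hs : ∀ p ∈ s, p.Prime) (e : ℕ → ℕ) :
    f (∏ p ∈ s, p ^ e p) = ∏ p ∈ s, f (p ^ e p) := by
  classical
  induction s using Finset.induction_on with
  | empty => simpa using hf1
  | insert _ _ ha ih =>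
    rename_i a s
    rw [Finset.prod_insert ha, Finset.prod_insert ha]
    have hcop : Nat.Coprime (a ^ e a) (∏ p ∈ s, p ^ e p) := by
      apply Nat.Coprime.pow_left
      apply Nat.Coprime.prod_right
      intro p hp
      apply Nat.Coprime.pow_right
      exact (Nat.coprime_primes (hs a (Finset.mem_insert_self a s))
        (hs p (Finset.mem_insert_of_mem hp))).mpr (fun he => ha (he ▸ hp))
    rw [hfm _ _ hcop, ih (fun p hp => hs p (Finset.mem_insert_of_mem hp))]

private lemma prod_factorization_eq {N n : ℕ} (hn : n ∈ Finset.Icc 1 N) :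
    ∏ p ∈ (Finset.Icc 1 N).filter Nat.Prime, p ^ n.factorization p = n := by
  rw [Finset.mem_Icc] at hn
  have hn0 : n ≠ 0 := by omega
  have hsub : n.primeFactors ⊆ (Finset.Icc 1 N).filter Nat.Prime := by
    intro p hp
    rw [Finset.mem_filter, Finset.mem_Icc]
    have hprime := Nat.prime_of_mem_primeFactors hp
    have hdvd := Nat.dvd_of_mem_primeFactors hp
    exact ⟨⟨hprime.one_lt.le, le_trans (Nat.le_of_dvd (by omega) hdvd) hn.2⟩, hprime⟩
  rw [← Finset.prod_subset hsub (fun p _ hp => by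
    rw [Nat.factorization_eq_zero_of_not_dvd (fun hd => hp (Nat.mem_primeFactors.mpr
      ⟨(Finset.mem_filter.mp ‹_›).2, hd, hn0⟩)), pow_zero])]
  conv_rhs => rw [← Nat.factorization_prod_pow_eq_self hn0]
  rw [Finsupp.prod, Nat.support_factorization]

private lemma sum_le_prod_primes (f : ℕ → ℝ) (hf0 : ∀ n, 0 ≤ f n) (hf1 : f 1 = 1)
    (hfm : ∀ m n, Nat.Coprime m n → f (m * n) = f m * f n) (N : ℕ) :
    ∑ n ∈ Finset.Icc 1 N, f n ≤
      ∏ p ∈ (Finset.Icc 1 N).filter Nat.Prime, ∑ k ∈ Finset.range (N + 1), f (p ^ k) := by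
  classical
  set P := (Finset.Icc 1 N).filter Nat.Prime with hP
  rw [Finset.prod_sum]
  set F : (∀ a ∈ P, ℕ) → ℝ := fun g => ∏ x ∈ P.attach, f (x.1 ^ g x.1 x.2) with hF
  set e : ℕ → (∀ a ∈ P, ℕ) := fun n => fun p _ => n.factorization p with he
  have hP_prime : ∀ p ∈ P, p.Prime := fun p hp => (Finset.mem_filter.mp hp).2
  have hrecon : ∀ n ∈ Finset.Icc 1 N, (∏ x ∈ P.attach, x.1 ^ n.factorization x.1) = n := by
    intro n hn
    rw [Finset.prod_attach P (fun p => p ^ n.factorization p)]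
    exact prod_factorization_eq hn
  have hFe : ∀ n ∈ Finset.Icc 1 N, F (e n) = f n := by
    intro n hn
    have h1 : F (e n) = ∏ p ∈ P, f (p ^ n.factorization p) :=
      Finset.prod_attach P (fun p => f (p ^ n.factorization p))
    rw [h1, ← map_prod_primes hf1 hfm P hP_prime (fun p => n.factorization p),
      prod_factorization_eq hn]
  have hinj : ∀ x ∈ Finset.Icc 1 N, ∀ y ∈ Finset.Icc 1 N, e x = e y → x = y := by
    intro x hx y hy hxy
    have hx' := prod_factorization_eq hx
    have hy' := prod_factorization_eq hy
    rw [← hx', ← hy']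
    apply Finset.prod_congr rfl
    intro p hp
    have := congrFun (congrFun hxy p) hp
    simp only [he] at this
    rw [this]
  have hsubset : (Finset.Icc 1 N).image e ⊆ P.pi (fun _ => Finset.range (N + 1)) := by
    intro g hg
    rw [Finset.mem_image] at hg
    obtain ⟨n, hn, rfl⟩ := hg
    rw [Finset.mem_pi]
    intro p hp
    rw [Finset.mem_range]
    rw [Finset.mem_Icc] at hn
    have h2 : n.factorization p < n := Nat.factorization_lt p (by omega)
    simp only [he]
    omega
  calc ∑ n ∈ Finset.Icc 1 N, f n
      = ∑ n ∈ Finset.Icc 1 N, F (e n) := Finset.sum_congr rfl (fun n hn => (hFe n hn).symm)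
    _ = ∑ g ∈ (Finset.Icc 1 N).image e, F g := (Finset.sum_image hinj).symm
    _ ≤ ∑ g ∈ P.pi (fun _ => Finset.range (N + 1)), F g :=
        Finset.sum_le_sum_of_subset_of_nonneg hsubset
          (fun g _ _ => Finset.prod_nonneg (fun _ _ => hf0 _))

private lemma sum_primes_dyadic (F : ℕ → ℝ) (m : ℕ) :
    ∑ p ∈ (Finset.Icc 1 (2^m)).filter Nat.Prime, F p
      = ∑ j ∈ Finset.range m, ∑ p ∈ (Finset.Ioc (2^j) (2^(j+1))).filter Nat.Prime, F p := by
  induction m with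
  | zero =>
    rw [Finset.range_zero, Finset.sum_empty, pow_zero, Finset.Icc_self,
      Finset.filter_singleton]
    simp [Nat.not_prime_one]
  | succ k ih =>
    rw [Finset.sum_range_succ, ← ih]
    have hunion : Finset.Icc 1 (2^(k+1)) = Finset.Icc 1 (2^k) ∪ Finset.Ioc (2^k) (2^(k+1)) := by
      ext a
      simp only [Finset.mem_Icc, Finset.mem_Ioc, Finset.mem_union]
      have h1 : (2:ℕ)^k ≤ 2^(k+1) := Nat.pow_le_pow_right (by norm_num) (by omega)
      omega
    have hdisj : Disjoint ((Finset.Icc 1 (2^k)).filter Nat.Prime)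
        ((Finset.Ioc (2^k) (2^(k+1))).filter Nat.Prime) := by
      rw [Finset.disjoint_left]
      intro a ha hb
      rw [Finset.mem_filter, Finset.mem_Icc] at ha
      rw [Finset.mem_filter, Finset.mem_Ioc] at hb
      omega
    rw [hunion, Finset.filter_union, Finset.sum_union hdisj]

private lemma primeSum_mono (h : ℕ → ℝ) (hnn : ∀ n, 0 ≤ h n) {s t : ℝ} (hst : s ≤ t) :
    primeSum h s ≤ primeSum h t := by
  apply Finset.sum_le_sum_of_subset_of_nonneg
  · apply Finset.filter_subset_filter
    exact Finset.Icc_subset_Icc le_rfl (Nat.floor_mono hst)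
  · intro p _ _; exact hnn p

private noncomputable def kappa : ℝ := (1 - (2:ℝ) ^ (-(1/4:ℝ)))⁻¹

private lemma q0_lt_one : (2:ℝ) ^ (-(1/4:ℝ)) < 1 :=
  Real.rpow_lt_one_of_one_lt_of_neg one_lt_two (by norm_num)

private lemma q0_nonneg : 0 ≤ (2:ℝ) ^ (-(1/4:ℝ)) := Real.rpow_nonneg (by norm_num) _

private lemma kappa_pos : 0 < kappa := by
  rw [kappa]
  have := q0_lt_one
  exact inv_pos.mpr (by linarith)

private lemma pow2_rpow (j : ℕ) (σ : ℝ) :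
    (((2:ℕ)^j : ℕ) : ℝ) ^ (-σ) = ((2:ℝ) ^ (-σ)) ^ j := by
  push_cast
  rw [← Real.rpow_natCast (2:ℝ) j, ← Real.rpow_mul (by norm_num), mul_comm,
    Real.rpow_mul (by norm_num), Real.rpow_natCast]

private lemma factor_bound (h : ℕ → ℝ) (hnonneg : ∀ n, 0 ≤ h n)
    (hone : h 1 = 1) (hpk : ∀ p k : ℕ, p.Prime → 2 ≤ k → h (p ^ k) ≤ h p)
    {p : ℕ} (hp : p.Prime) {σ : ℝ} (hσ1 : 1/4 ≤ σ) (hσ2 : σ ≤ 1) (N : ℕ) :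
    ∑ k ∈ Finset.range (N + 1), h (p ^ k) * ((p ^ k : ℕ) : ℝ) ^ (-σ)
      ≤ Real.exp (kappa * (h p * (p : ℝ) ^ (-σ))) := by
  have hp2 : (2:ℝ) ≤ (p:ℝ) := by exact_mod_cast hp.two_le
  have hppos : (0:ℝ) < (p:ℝ) := by linarith
  set r : ℝ := (p:ℝ) ^ (-σ) with hr
  have hr0 : 0 < r := Real.rpow_pos_of_pos hppos _
  have hrq : r ≤ (2:ℝ) ^ (-(1/4:ℝ)) := by
    calc r ≤ (p:ℝ) ^ (-(1/4:ℝ)) :=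
          Real.rpow_le_rpow_of_exponent_le (by linarith) (by linarith)
      _ ≤ (2:ℝ) ^ (-(1/4:ℝ)) :=
          Real.rpow_le_rpow_of_nonpos (by norm_num) hp2 (by norm_num)
  have hr1 : r < 1 := lt_of_le_of_lt hrq q0_lt_one
  have hterm : ∀ i : ℕ, h (p ^ (i+1)) * ((p ^ (i+1) : ℕ) : ℝ) ^ (-σ) ≤ h p * (r * r ^ i) := by
    intro i
    have h1 : h (p ^ (i+1)) ≤ h p := by
      rcases i with _ | i
      · rw [pow_one]
      · exact hpk p (i+2) hp (by omega)
    have h2 : ((p ^ (i+1) : ℕ) : ℝ) ^ (-σ) = r ^ (i+1) := by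
      push_cast
      rw [← Real.rpow_natCast (p:ℝ) (i+1), ← Real.rpow_mul hppos.le, mul_comm,
        Real.rpow_mul hppos.le, Real.rpow_natCast]
    have h3 : r ^ (i+1) = r * r ^ i := by ring
    rw [h2, h3]
    have : (0:ℝ) ≤ r * r ^ i := by positivity
    calc h (p ^ (i+1)) * (r * r ^ i) ≤ h p * (r * r ^ i) :=
          mul_le_mul_of_nonneg_right h1 this
      _ = h p * (r * r ^ i) := rfl
  calc ∑ k ∈ Finset.range (N + 1), h (p ^ k) * ((p ^ k : ℕ) : ℝ) ^ (-σ)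
      = (∑ i ∈ Finset.range N, h (p ^ (i+1)) * ((p ^ (i+1) : ℕ) : ℝ) ^ (-σ))
          + h (p ^ 0) * ((p ^ 0 : ℕ) : ℝ) ^ (-σ) := Finset.sum_range_succ' _ N
    _ ≤ (∑ i ∈ Finset.range N, h p * (r * r ^ i)) + 1 := by
        have hA := Finset.sum_le_sum (fun i (_ : i ∈ Finset.range N) => hterm i)
        have hB : h (p ^ 0) * ((p ^ 0 : ℕ) : ℝ) ^ (-σ) = 1 := by
          rw [pow_zero, hone, Nat.cast_one, Real.one_rpow, one_mul]
        linarith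
    _ = h p * r * (∑ i ∈ Finset.range N, r ^ i) + 1 := by
        rw [Finset.mul_sum]
        congr 1
        exact Finset.sum_congr rfl (fun i _ => by ring)
    _ ≤ h p * r * (1 - r)⁻¹ + 1 := by
        have hhp := hnonneg p
        have := mul_le_mul_of_nonneg_left (geom_sum_le_inv hr0.le hr1 N)
          (mul_nonneg hhp hr0.le)
        linarith
    _ ≤ kappa * (h p * r) + 1 := by
        have hk : (1 - r)⁻¹ ≤ kappa := by
          rw [kappa]
          apply inv_anti₀
          · have := q0_lt_one; linarith
          · linarith [hrq]
        have hhp := hnonneg p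
        have := mul_le_mul_of_nonneg_left hk (mul_nonneg hhp hr0.le)
        nlinarith
    _ ≤ Real.exp (kappa * (h p * r)) := by
        have := Real.add_one_le_exp (kappa * (h p * r))
        linarith

private lemma prime_dirichlet_bound
    (h : ℕ → ℝ) (hnonneg : ∀ n, 0 ≤ h n)
    (C c x₁ : ℝ) (hC : 0 < C) (hc : 0 < c) (hx₁ : 2 ≤ x₁)
    (hb : ∀ t : ℝ, t ≥ x₁ → primeSum h t ≤ C * Real.sqrt t / Real.exp (c * Real.sqrt (Real.log t)))
    (x : ℝ) (hx : Real.exp 1 ≤ x)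
    (σ : ℝ) (hσ : σ = 1/2 - min (c/2) (1/4) / Real.sqrt (Real.log x)) :
    ∑ p ∈ (Finset.Icc 1 ⌊x⌋₊).filter Nat.Prime, h p * (p:ℝ) ^ (-σ)
      ≤ primeSum h x₁ * kappa + C * Real.sqrt 2 * (1 + 2048 / (c/2)^4) := by
  have hx1 : (1:ℝ) ≤ x := le_trans (by nlinarith [Real.add_one_le_exp (1:ℝ)]) hx
  have hx0 : (0:ℝ) < x := by linarith
  have hlogx : 1 ≤ Real.log x := by
    have := Real.log_le_log (Real.exp_pos 1) hx
    rwa [Real.log_exp] at this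
  set L := Real.sqrt (Real.log x) with hLdef
  have hL1 : 1 ≤ L := by
    rw [hLdef, show (1:ℝ) = Real.sqrt 1 by rw [Real.sqrt_one]]
    exact Real.sqrt_le_sqrt hlogx
  have hL0 : 0 < L := by linarith
  set δ := min (c/2) (1/4) with hδdef
  have hδ0 : 0 < δ := lt_min (by linarith) (by norm_num)
  have hδq : δ ≤ 1/4 := min_le_right _ _
  have hδc : δ ≤ c/2 := min_le_left _ _
  set η := δ / L with hηdef
  have hη0 : 0 < η := div_pos hδ0 hL0
  have hη4 : η ≤ 1/4 := le_trans (div_le_self hδ0.le hL1) hδq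
  have hησ : η = 1/2 - σ := by rw [hσ]; ring
  have hσ14 : 1/4 ≤ σ := by rw [hσ]; linarith
  have hσ12 : σ ≤ 1/2 := by rw [hσ]; linarith
  have hηL : η * L = δ := div_mul_cancel₀ δ (ne_of_gt hL0)
  set N := ⌊x⌋₊ with hNdef
  have hN1 : 1 ≤ N := Nat.le_floor (by exact_mod_cast hx1)
  have hNx : (N:ℝ) ≤ x := Nat.floor_le hx0.le
  set J := Nat.log 2 N with hJdef
  have hNlt : N < 2^(J+1) := Nat.lt_pow_succ_log_self (by norm_num) N
  have h2J : (2:ℕ)^J ≤ N := Nat.pow_log_le_self 2 (by omega)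
  have hlog2 : (0:ℝ) < Real.log 2 := Real.log_pos one_lt_two
  have hlog2half : (1/2:ℝ) ≤ Real.log 2 := by
    have := Real.log_two_gt_d9; linarith
  set B := primeSum h x₁ with hBdef
  have hB0 : 0 ≤ B := Finset.sum_nonneg (fun p _ => hnonneg p)
  set q : ℝ := (2:ℝ) ^ (-(1/4:ℝ)) with hqdef
  set E : ℕ → ℝ := fun j => Real.exp (-(c/2 * Real.sqrt ((j:ℝ) * Real.log 2))) with hEdef
  -- block bound
  have hblock : ∀ j ∈ Finset.range (J+1),
      ∑ p ∈ (Finset.Ioc (2^j) (2^(j+1))).filter Nat.Prime, h p * (p:ℝ) ^ (-σ)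
        ≤ B * q ^ j + C * Real.sqrt 2 * E j := by
    intro j hj
    rw [Finset.mem_range] at hj
    set T : ℝ := ((2^(j+1) : ℕ) : ℝ) with hTdef
    have hT2 : T = (2:ℝ)^(j+1) := by rw [hTdef]; push_cast; ring
    have hc2pos : (0:ℝ) < ((2^j : ℕ) : ℝ) := by positivity
    set c2j : ℝ := ((2^j : ℕ) : ℝ) ^ (-σ) with hc2def
    have hc2nn : 0 ≤ c2j := Real.rpow_nonneg hc2pos.le _
    have hstep1 : ∑ p ∈ (Finset.Ioc (2^j) (2^(j+1))).filter Nat.Prime, h p * (p:ℝ) ^ (-σ)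
        ≤ c2j * primeSum h T := by
      have e1 : ∀ p ∈ (Finset.Ioc (2^j) (2^(j+1))).filter Nat.Prime,
          h p * (p:ℝ) ^ (-σ) ≤ h p * c2j := by
        intro p hp
        rw [Finset.mem_filter, Finset.mem_Ioc] at hp
        apply mul_le_mul_of_nonneg_left _ (hnonneg p)
        apply Real.rpow_le_rpow_of_nonpos hc2pos (by exact_mod_cast hp.1.1.le) (by linarith)
      have e2 : primeSum h T = ∑ p ∈ (Finset.Icc 1 (2^(j+1))).filter Nat.Prime, h p := by
        rw [primeSum, hTdef, Nat.floor_natCast]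
      calc ∑ p ∈ (Finset.Ioc (2^j) (2^(j+1))).filter Nat.Prime, h p * (p:ℝ) ^ (-σ)
          ≤ ∑ p ∈ (Finset.Ioc (2^j) (2^(j+1))).filter Nat.Prime, h p * c2j :=
            Finset.sum_le_sum e1
        _ = (∑ p ∈ (Finset.Ioc (2^j) (2^(j+1))).filter Nat.Prime, h p) * c2j := by
            rw [← Finset.sum_mul]
        _ ≤ primeSum h T * c2j := by
            apply mul_le_mul_of_nonneg_right _ hc2nn
            rw [e2]
            apply Finset.sum_le_sum_of_subset_of_nonneg
            · apply Finset.filter_subset_filter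
              intro a ha
              rw [Finset.mem_Ioc] at ha
              rw [Finset.mem_Icc]
              constructor
              · have : 0 < (2:ℕ)^j := Nat.pow_pos (by norm_num)
                omega
              · exact ha.2
            · intro p _ _; exact hnonneg p
        _ = c2j * primeSum h T := mul_comm _ _
    by_cases hcase : x₁ ≤ T
    · -- large block: use the hypothesis
      have hPS := hb T hcase
      have hlogT : Real.log T = ((j:ℝ)+1) * Real.log 2 := by
        rw [hT2, Real.log_pow]; push_cast; ring
      have hsqT : Real.sqrt T = Real.sqrt ((2:ℝ)^j) * Real.sqrt 2 := by
        rw [hT2, pow_succ, Real.sqrt_mul (by positivity)]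
      have hcast2 : ((2^j : ℕ) : ℝ) = (2:ℝ)^j := by push_cast; ring
      have hcomb : c2j * Real.sqrt ((2:ℝ)^j) = Real.exp (η * ((j:ℝ) * Real.log 2)) := by
        rw [hc2def, hcast2, Real.sqrt_eq_rpow, ← Real.rpow_add (by positivity)]
        rw [Real.rpow_def_of_pos (by positivity), Real.log_pow]
        congr 1
        rw [hησ]
        push_cast
        ring
      have hjlog : (j:ℝ) * Real.log 2 ≤ Real.log x := by
        have hj' : (2:ℕ)^j ≤ N := le_trans (Nat.pow_le_pow_right (by norm_num) (by omega)) h2J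
        have : ((2:ℝ))^j ≤ x := by
          calc ((2:ℝ))^j = ((2^j : ℕ) : ℝ) := by push_cast; ring
            _ ≤ (N:ℝ) := by exact_mod_cast hj'
            _ ≤ x := hNx
        have := Real.log_le_log (by positivity) this
        rwa [Real.log_pow] at this
      have hjl0 : (0:ℝ) ≤ (j:ℝ) * Real.log 2 := by positivity
      have hsq_j : Real.sqrt ((j:ℝ) * Real.log 2) * Real.sqrt ((j:ℝ) * Real.log 2)
          = (j:ℝ) * Real.log 2 := Real.mul_self_sqrt hjl0
      have hsqmono : Real.sqrt ((j:ℝ) * Real.log 2) ≤ L :=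
        Real.sqrt_le_sqrt hjlog
      have h1 : η * ((j:ℝ) * Real.log 2) ≤ c/2 * Real.sqrt ((j:ℝ) * Real.log 2) := by
        have e2 : η * Real.sqrt ((j:ℝ) * Real.log 2) ≤ δ := by
          calc η * Real.sqrt ((j:ℝ) * Real.log 2) ≤ η * L :=
                mul_le_mul_of_nonneg_left hsqmono hη0.le
            _ = δ := hηL
        calc η * ((j:ℝ) * Real.log 2)
            = (η * Real.sqrt ((j:ℝ) * Real.log 2)) * Real.sqrt ((j:ℝ) * Real.log 2) := by
              rw [mul_assoc, hsq_j]
          _ ≤ δ * Real.sqrt ((j:ℝ) * Real.log 2) :=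
              mul_le_mul_of_nonneg_right e2 (Real.sqrt_nonneg _)
          _ ≤ c/2 * Real.sqrt ((j:ℝ) * Real.log 2) :=
              mul_le_mul_of_nonneg_right hδc (Real.sqrt_nonneg _)
      have h2 : Real.sqrt ((j:ℝ) * Real.log 2) ≤ Real.sqrt (((j:ℝ)+1) * Real.log 2) := by
        apply Real.sqrt_le_sqrt
        apply mul_le_mul_of_nonneg_right _ hlog2.le
        linarith
      have hkey : c2j * (C * Real.sqrt T / Real.exp (c * Real.sqrt (Real.log T)))
          ≤ C * Real.sqrt 2 * E j := by
        rw [hlogT, hsqT]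
        have expand : c2j * (C * (Real.sqrt ((2:ℝ)^j) * Real.sqrt 2) /
            Real.exp (c * Real.sqrt (((j:ℝ)+1) * Real.log 2)))
            = C * Real.sqrt 2 * (Real.exp (η * ((j:ℝ) * Real.log 2)) /
              Real.exp (c * Real.sqrt (((j:ℝ)+1) * Real.log 2))) := by
          rw [← hcomb]; ring
        rw [expand, ← Real.exp_sub]
        apply mul_le_mul_of_nonneg_left _ (by positivity)
        rw [hEdef]
        apply Real.exp_le_exp.mpr
        have h3 : c * Real.sqrt ((j:ℝ) * Real.log 2) ≤ c * Real.sqrt (((j:ℝ)+1) * Real.log 2) :=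
          mul_le_mul_of_nonneg_left h2 hc.le
        linarith
      calc ∑ p ∈ (Finset.Ioc (2^j) (2^(j+1))).filter Nat.Prime, h p * (p:ℝ) ^ (-σ)
          ≤ c2j * primeSum h T := hstep1
        _ ≤ c2j * (C * Real.sqrt T / Real.exp (c * Real.sqrt (Real.log T))) :=
            mul_le_mul_of_nonneg_left hPS hc2nn
        _ ≤ C * Real.sqrt 2 * E j := hkey
        _ ≤ B * q ^ j + C * Real.sqrt 2 * E j := by
            have : 0 ≤ B * q ^ j := mul_nonneg hB0 (pow_nonneg q0_nonneg j)
            linarith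
    · -- small block
      push_neg at hcase
      have hmono : primeSum h T ≤ B := primeSum_mono h hnonneg hcase.le
      have hqj : c2j ≤ q ^ j := by
        rw [hc2def, pow2_rpow j σ]
        apply pow_le_pow_left₀ (Real.rpow_nonneg (by norm_num) _)
        exact Real.rpow_le_rpow_of_exponent_le one_le_two (by linarith)
      calc ∑ p ∈ (Finset.Ioc (2^j) (2^(j+1))).filter Nat.Prime, h p * (p:ℝ) ^ (-σ)
          ≤ c2j * primeSum h T := hstep1
        _ ≤ q ^ j * B := by
            apply mul_le_mul hqj hmono (Finset.sum_nonneg (fun p _ => hnonneg p)) (pow_nonneg q0_nonneg j)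
        _ = B * q ^ j := mul_comm _ _
        _ ≤ B * q ^ j + C * Real.sqrt 2 * E j := by
            have : 0 ≤ C * Real.sqrt 2 * E j := by positivity
            linarith
  -- assemble
  have hEsum : ∑ j ∈ Finset.range (J+1), E j ≤ 1 + 2048 / (c/2)^4 := by
    rw [Finset.sum_range_succ']
    have hE0 : E 0 = 1 := by
      show Real.exp (-(c/2 * Real.sqrt (((0:ℕ):ℝ) * Real.log 2))) = 1
      simp
    have hEterm : ∀ i : ℕ, E (i+1) ≤ (1024 / (c/2)^4) * (1/((i:ℝ)+1)^2) := by
      intro i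
      set a : ℝ := ((i:ℝ)+1) * Real.log 2 with hadef
      have ha0 : 0 < a := by positivity
      set s : ℝ := c/2 * Real.sqrt a with hsdef
      have hs0 : 0 < s := by positivity
      have hEi : E (i+1) = Real.exp (-s) := by
        show Real.exp (-(c/2 * Real.sqrt ((((i+1):ℕ):ℝ) * Real.log 2))) = Real.exp (-s)
        rw [hsdef, hadef]
        push_cast
        ring_nf
      have hs4 : s^4 = (c/2)^4 * a^2 := by
        have hsq : Real.sqrt a ^ 2 = a := Real.sq_sqrt ha0.le
        rw [hsdef, mul_pow]
        congr 1
        rw [show (Real.sqrt a)^4 = ((Real.sqrt a)^2)^2 by ring, hsq]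
      have ha2 : ((i:ℝ)+1)^2 * (1/4) ≤ a^2 := by
        rw [hadef]
        have h2 : (1/4:ℝ) ≤ (Real.log 2)^2 := by nlinarith [hlog2half, hlog2]
        calc ((i:ℝ)+1)^2 * (1/4) ≤ ((i:ℝ)+1)^2 * (Real.log 2)^2 :=
              mul_le_mul_of_nonneg_left h2 (by positivity)
          _ = (((i:ℝ)+1) * Real.log 2)^2 := by ring
      have hlb : (c/2)^4 * (((i:ℝ)+1)^2 * (1/4)) ≤ s^4 := by
        rw [hs4]
        apply mul_le_mul_of_nonneg_left ha2 (by positivity)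
      calc E (i+1) = Real.exp (-s) := hEi
        _ ≤ 256 / s^4 := exp_neg_le_aux hs0
        _ ≤ 256 / ((c/2)^4 * (((i:ℝ)+1)^2 * (1/4))) := by
            apply div_le_div_of_nonneg_left (by norm_num) (by positivity) hlb
        _ = (1024 / (c/2)^4) * (1/((i:ℝ)+1)^2) := by
            field_simp
            ring
    calc (∑ i ∈ Finset.range J, E (i+1)) + E 0
        ≤ (∑ i ∈ Finset.range J, (1024 / (c/2)^4) * (1/((i:ℝ)+1)^2)) + 1 := by
          rw [hE0]
          have := Finset.sum_le_sum (fun i (_ : i ∈ Finset.range J) => hEterm i)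
          linarith
      _ = (1024 / (c/2)^4) * (∑ i ∈ Finset.range J, 1/((i:ℝ)+1)^2) + 1 := by
          rw [Finset.mul_sum]
      _ ≤ (1024 / (c/2)^4) * 2 + 1 := by
          have := sum_sq_inv_le J
          have hpos : (0:ℝ) ≤ 1024 / (c/2)^4 := by positivity
          nlinarith
      _ = 1 + 2048 / (c/2)^4 := by ring
  have hqsum : ∑ j ∈ Finset.range (J+1), q ^ j ≤ kappa := by
    rw [kappa]
    exact geom_sum_le_inv q0_nonneg q0_lt_one (J+1)
  calc ∑ p ∈ (Finset.Icc 1 ⌊x⌋₊).filter Nat.Prime, h p * (p:ℝ) ^ (-σ)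
      ≤ ∑ p ∈ (Finset.Icc 1 (2^(J+1))).filter Nat.Prime, h p * (p:ℝ) ^ (-σ) := by
        apply Finset.sum_le_sum_of_subset_of_nonneg
        · apply Finset.filter_subset_filter
          apply Finset.Icc_subset_Icc le_rfl
          omega
        · intro p _ _
          exact mul_nonneg (hnonneg p) (Real.rpow_nonneg (by positivity) _)
    _ = ∑ j ∈ Finset.range (J+1), ∑ p ∈ (Finset.Ioc (2^j) (2^(j+1))).filter Nat.Prime,
          h p * (p:ℝ) ^ (-σ) := sum_primes_dyadic _ (J+1)
    _ ≤ ∑ j ∈ Finset.range (J+1), (B * q ^ j + C * Real.sqrt 2 * E j) :=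
        Finset.sum_le_sum hblock
    _ = B * (∑ j ∈ Finset.range (J+1), q ^ j)
          + C * Real.sqrt 2 * (∑ j ∈ Finset.range (J+1), E j) := by
        rw [Finset.sum_add_distrib, ← Finset.mul_sum, ← Finset.mul_sum]
    _ ≤ B * kappa + C * Real.sqrt 2 * (1 + 2048 / (c/2)^4) := by
        have h1 : B * (∑ j ∈ Finset.range (J+1), q ^ j) ≤ B * kappa :=
          mul_le_mul_of_nonneg_left hqsum hB0
        have h2 : C * Real.sqrt 2 * (∑ j ∈ Finset.range (J+1), E j)
            ≤ C * Real.sqrt 2 * (1 + 2048 / (c/2)^4) :=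
          mul_le_mul_of_nonneg_left hEsum (by positivity)
        linarith

theorem lemma_3 (h : ℕ → ℝ) (hnonneg : ∀ n, 0 ≤ h n)
    (hone : h 1 = 1)
    (hmul : ∀ m n : ℕ, Nat.Coprime m n → h (m * n) = h m * h n)
    (hp2 : ∀ p : ℕ, p.Prime → h p ≤ 2)
    (hpk : ∀ p k : ℕ, p.Prime → 2 ≤ k → h (p ^ k) ≤ h p)
    (c : ℝ) (hc : 0 < c)
    (hbound : ∃ C > 0, ∃ x₀ : ℝ, ∀ x ≥ x₀,
      primeSum h x ≤ C * Real.sqrt x / Real.exp (c * Real.sqrt (Real.log x))) :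
    ∃ δ > 0, ∃ C > 0, ∃ x₀ : ℝ, ∀ x ≥ x₀,
      partialSum h x ≤ C * Real.sqrt x / Real.exp (δ * Real.sqrt (Real.log x)) := by
  obtain ⟨C, hC, x₀, hb0⟩ := hbound
  set x₁ : ℝ := max x₀ 2 with hx₁def
  have hx₁2 : 2 ≤ x₁ := le_max_right _ _
  have hb : ∀ t : ℝ, t ≥ x₁ → primeSum h t ≤ C * Real.sqrt t / Real.exp (c * Real.sqrt (Real.log t)) :=
    fun t ht => hb0 t (le_trans (le_max_left _ _) ht)
  set δ : ℝ := min (c/2) (1/4) with hδdef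
  have hδ0 : 0 < δ := lt_min (by linarith) (by norm_num)
  set D : ℝ := primeSum h x₁ * kappa + C * Real.sqrt 2 * (1 + 2048 / (c/2)^4) with hDdef
  refine ⟨δ, hδ0, Real.exp (kappa * D), Real.exp_pos _, max x₁ (Real.exp 1), ?_⟩
  intro x hx
  have hxe : Real.exp 1 ≤ x := le_trans (le_max_right _ _) hx
  have hxx₁ : x₁ ≤ x := le_trans (le_max_left _ _) hx
  have hx1 : (1:ℝ) ≤ x := le_trans (by nlinarith [Real.add_one_le_exp (1:ℝ)]) hxe
  have hx0 : (0:ℝ) < x := by linarith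
  have hlogx : 1 ≤ Real.log x := by
    have := Real.log_le_log (Real.exp_pos 1) hxe
    rwa [Real.log_exp] at this
  have hlogx0 : 0 ≤ Real.log x := by linarith
  set L : ℝ := Real.sqrt (Real.log x) with hLdef
  have hL1 : 1 ≤ L := by
    rw [hLdef, show (1:ℝ) = Real.sqrt 1 by rw [Real.sqrt_one]]
    exact Real.sqrt_le_sqrt hlogx
  have hL0 : 0 < L := by linarith
  set η : ℝ := δ / L with hηdef
  have hη0 : 0 < η := div_pos hδ0 hL0
  have hη4 : η ≤ 1/4 := le_trans (div_le_self hδ0.le hL1) (min_le_right _ _)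
  set σ : ℝ := 1/2 - η with hσdef
  have hσ14 : 1/4 ≤ σ := by rw [hσdef]; linarith
  have hσ1 : σ ≤ 1 := by rw [hσdef]; linarith
  have hσ0 : 0 ≤ σ := le_trans (by norm_num) hσ14
  set N := ⌊x⌋₊ with hNdef
  set f : ℕ → ℝ := fun n => h n * (n:ℝ) ^ (-σ) with hfdef
  have hf0 : ∀ n, 0 ≤ f n := fun n => mul_nonneg (hnonneg n) (Real.rpow_nonneg (Nat.cast_nonneg n) _)
  have hf1 : f 1 = 1 := by
    rw [hfdef]
    simp [hone]
  have hfm : ∀ m n : ℕ, Nat.Coprime m n → f (m * n) = f m * f n := by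
    intro m n hmn
    rw [hfdef]
    simp only
    rw [hmul m n hmn, Nat.cast_mul, Real.mul_rpow (Nat.cast_nonneg m) (Nat.cast_nonneg n)]
    ring
  -- Step 1 : Rankin's trick
  have step1 : partialSum h x ≤ x ^ σ * ∑ n ∈ Finset.Icc 1 N, f n := by
    rw [partialSum, Finset.mul_sum]
    apply Finset.sum_le_sum
    intro n hn
    rw [Finset.mem_Icc] at hn
    have hn0 : (0:ℝ) < (n:ℝ) := by exact_mod_cast Nat.lt_of_lt_of_le Nat.zero_lt_one hn.1
    have hnx : (n:ℝ) ≤ x := le_trans (by exact_mod_cast hn.2 : (n:ℝ) ≤ (N:ℝ)) (Nat.floor_le hx0.le)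
    have hge1 : 1 ≤ x ^ σ * (n:ℝ) ^ (-σ) := by
      rw [Real.rpow_neg hn0.le, ← div_eq_mul_inv]
      rw [le_div_iff₀ (Real.rpow_pos_of_pos hn0 _), one_mul]
      exact Real.rpow_le_rpow hn0.le hnx hσ0
    calc h n = h n * 1 := (mul_one _).symm
      _ ≤ h n * (x ^ σ * (n:ℝ) ^ (-σ)) := mul_le_mul_of_nonneg_left hge1 (hnonneg n)
      _ = x ^ σ * (h n * (n:ℝ) ^ (-σ)) := by ring
      _ = x ^ σ * f n := rfl
  -- Step 2 : Euler product
  have step2 : ∑ n ∈ Finset.Icc 1 N, f n ≤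
      ∏ p ∈ (Finset.Icc 1 N).filter Nat.Prime, ∑ k ∈ Finset.range (N + 1), f (p ^ k) :=
    sum_le_prod_primes f hf0 hf1 hfm N
  -- Step 3 : bound each Euler factor
  have step3 : ∏ p ∈ (Finset.Icc 1 N).filter Nat.Prime, ∑ k ∈ Finset.range (N + 1), f (p ^ k)
      ≤ Real.exp (kappa * ∑ p ∈ (Finset.Icc 1 N).filter Nat.Prime, h p * (p:ℝ) ^ (-σ)) := by
    rw [Finset.mul_sum, Real.exp_sum]
    apply Finset.prod_le_prod
    · intro p _
      exact Finset.sum_nonneg (fun k _ => hf0 _)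
    · intro p hp
      rw [Finset.mem_filter] at hp
      exact factor_bound h hnonneg hone hpk hp.2 hσ14 hσ1 N
  -- Step 4 : bound the prime Dirichlet sum
  have step4 : ∑ p ∈ (Finset.Icc 1 N).filter Nat.Prime, h p * (p:ℝ) ^ (-σ) ≤ D := by
    rw [hDdef]
    exact prime_dirichlet_bound h hnonneg C c x₁ hC hc hx₁2 hb x hxe σ
      (by rw [hσdef, hηdef, hδdef, hLdef])
  have step5 : Real.exp (kappa * ∑ p ∈ (Finset.Icc 1 N).filter Nat.Prime, h p * (p:ℝ) ^ (-σ))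
      ≤ Real.exp (kappa * D) :=
    Real.exp_le_exp.mpr (mul_le_mul_of_nonneg_left step4 kappa_pos.le)
  -- final computation
  have hxσ : x ^ σ = Real.sqrt x * Real.exp (-(δ * L)) := by
    have h1 : x ^ σ = x ^ (1/2:ℝ) * x ^ (-η) := by
      rw [← Real.rpow_add hx0]
      congr 1
    have h2 : x ^ (-η) = Real.exp (-(δ * L)) := by
      rw [Real.rpow_def_of_pos hx0]
      have hL2 : L * L = Real.log x := Real.mul_self_sqrt hlogx0
      have e : Real.log x * -η = -(δ * L) := by
        rw [hηdef, ← hL2]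
        field_simp
      rw [e]
    rw [h1, h2, ← Real.sqrt_eq_rpow]
  have chain : partialSum h x ≤ x ^ σ * Real.exp (kappa * D) := by
    have hx_nn : (0:ℝ) ≤ x ^ σ := Real.rpow_nonneg hx0.le _
    calc partialSum h x ≤ x ^ σ * ∑ n ∈ Finset.Icc 1 N, f n := step1
      _ ≤ x ^ σ * Real.exp (kappa * D) := by
          apply mul_le_mul_of_nonneg_left _ hx_nn
          exact le_trans step2 (le_trans step3 step5)
  calc partialSum h x ≤ x ^ σ * Real.exp (kappa * D) := chain
    _ = Real.exp (kappa * D) * Real.sqrt x / Real.exp (δ * L) := by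
        rw [hxσ, Real.exp_neg]
        field_simp
    _ = Real.exp (kappa * D) * Real.sqrt x / Real.exp (δ * Real.sqrt (Real.log x)) := by
        rw [hLdef]
end

section
/- Suppose h : ℕ → [0,∞) is multiplicative, h(p) ≤ 2 and h(p^k) ≤ h(p) for all primes p and k ≥ 2, and ∑_{p ≤ x} h(p) ≪ √x / exp(c√(log x)) for some c > 0. Then for any 0 < δ < c/2 small enough that exp(δ√(log p)) < √p for all primes p, the series ∑_{n=1}^∞ h(n) exp(δ√(log n)) / √n converges. -/
namespace SeriesConvAux

/-- The weight `w δ n = exp (δ √(log n)) / √n`. -/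
noncomputable def w (δ : ℝ) (n : ℕ) : ℝ :=
  Real.exp (δ * Real.sqrt (Real.log n)) / Real.sqrt n

lemma sqrt_add_le {x y : ℝ} (hx : 0 ≤ x) (hy : 0 ≤ y) :
    Real.sqrt (x + y) ≤ Real.sqrt x + Real.sqrt y := by
  rw [show Real.sqrt x + Real.sqrt y = Real.sqrt ((Real.sqrt x + Real.sqrt y) ^ 2) by
    rw [Real.sqrt_sq (by positivity)]]
  apply Real.sqrt_le_sqrt
  have h1 := Real.sq_sqrt hx
  have h2 := Real.sq_sqrt hy
  have h3 := Real.sqrt_nonneg x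
  have h4 := Real.sqrt_nonneg y
  nlinarith

lemma w_one (δ : ℝ) : w δ 1 = 1 := by
  simp [w]

lemma w_pos {δ : ℝ} {n : ℕ} (hn : 1 ≤ n) : 0 < w δ n := by
  have : (0 : ℝ) < n := by exact_mod_cast hn
  unfold w
  positivity

lemma w_nonneg (δ : ℝ) (n : ℕ) : 0 ≤ w δ n := by
  unfold w; positivity

lemma w_submul {δ : ℝ} (hδ : 0 ≤ δ) {a b : ℕ} (ha : 1 ≤ a) (hb : 1 ≤ b) :
    w δ (a * b) ≤ w δ a * w δ b := by
  have ha0 : (0:ℝ) < a := by exact_mod_cast ha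
  have hb0 : (0:ℝ) < b := by exact_mod_cast hb
  have hla : 0 ≤ Real.log a := Real.log_nonneg (by exact_mod_cast ha)
  have hlb : 0 ≤ Real.log b := Real.log_nonneg (by exact_mod_cast hb)
  have hcast : ((a * b : ℕ) : ℝ) = (a : ℝ) * b := by push_cast; ring
  have hlog : Real.log ((a * b : ℕ) : ℝ) = Real.log a + Real.log b := by
    rw [hcast, Real.log_mul ha0.ne' hb0.ne']
  have hsqrt : Real.sqrt ((a * b : ℕ) : ℝ) = Real.sqrt a * Real.sqrt b := by
    rw [hcast, Real.sqrt_mul ha0.le]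
  unfold w
  rw [hlog, hsqrt, div_mul_div_comm]
  apply div_le_div_of_nonneg_right ?_ (by positivity)
  · rw [← Real.exp_add, ← mul_add]
    exact Real.exp_le_exp.mpr (mul_le_mul_of_nonneg_left (sqrt_add_le hla hlb) hδ)

lemma w_pow_le {δ : ℝ} (hδ : 0 ≤ δ) {p : ℕ} (hp : 1 ≤ p) (k : ℕ) :
    w δ (p ^ k) ≤ w δ p ^ k := by
  induction k with
  | zero => simp [w_one]
  | succ k ih =>
    calc w δ (p ^ (k + 1)) = w δ (p ^ k * p) := by ring_nf
    _ ≤ w δ (p ^ k) * w δ p := w_submul hδ (Nat.one_le_pow _ _ hp) hp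
    _ ≤ w δ p ^ k * w δ p := by
        exact mul_le_mul_of_nonneg_right ih (w_nonneg δ p)
    _ = w δ p ^ (k + 1) := by ring

/-- The multiplicative majorant `G n = ∏_{p^k ∥ n} h (p^k) * w δ (p^k)`. -/
noncomputable def G (h : ℕ → ℝ) (δ : ℝ) (n : ℕ) : ℝ :=
  if n = 0 then 0 else n.factorization.prod fun p k => h (p ^ k) * w δ (p ^ k)

lemma G_one (h : ℕ → ℝ) (δ : ℝ) : G h δ 1 = 1 := by
  simp [G]

lemma G_mul (h : ℕ → ℝ) (δ : ℝ) {m n : ℕ} (hmn : Nat.Coprime m n) :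
    G h δ (m * n) = G h δ m * G h δ n := by
  rcases eq_or_ne m 0 with rfl | hm
  · have : n = 1 := by simpa [Nat.coprime_zero_left] using hmn
    subst this; simp [G]
  rcases eq_or_ne n 0 with rfl | hn
  · have : m = 1 := by simpa [Nat.coprime_zero_right] using hmn
    subst this; simp [G]
  have hmn0 : m * n ≠ 0 := Nat.mul_ne_zero hm hn
  simp only [G, if_neg hm, if_neg hn, if_neg hmn0]
  rw [Nat.factorization_mul hm hn, Finsupp.prod_add_index_of_disjoint]
  rw [Nat.support_factorization, Nat.support_factorization]
  exact Nat.Coprime.disjoint_primeFactors hmn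

lemma G_prime_pow {h : ℕ → ℝ} (hone : h 1 = 1) {δ : ℝ} {p : ℕ} (hp : p.Prime) (k : ℕ) :
    G h δ (p ^ k) = if k = 0 then 1 else h (p ^ k) * w δ (p ^ k) := by
  rcases Nat.eq_zero_or_pos k with rfl | hk
  · simp [G_one]
  · have hne : p ^ k ≠ 0 := pow_ne_zero _ hp.pos.ne'
    rw [G, if_neg hne, hp.factorization_pow, Finsupp.prod_single_index, if_neg hk.ne']
    simp [w_one, hone]

lemma G_nonneg {h : ℕ → ℝ} (hnonneg : ∀ n, 0 ≤ h n) (δ : ℝ) (n : ℕ) :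
    0 ≤ G h δ n := by
  unfold G
  split
  · exact le_refl 0
  · exact Finset.prod_nonneg fun p _ => mul_nonneg (hnonneg _) (w_nonneg δ _)

lemma w_le_prod {δ : ℝ} (hδ : 0 ≤ δ) :
    ∀ {n : ℕ}, n ≠ 0 → w δ n ≤ n.factorization.prod fun p k => w δ (p ^ k) := by
  have key : ∀ n : ℕ, n ≠ 0 → w δ n ≤ n.factorization.prod fun p k => w δ (p ^ k) := by
    apply Nat.recOnPosPrimePosCoprime
    · intro p n hp hn _
      rw [hp.factorization_pow, Finsupp.prod_single_index (by simp [w_one])]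
    · intro h0; exact absurd rfl h0
    · intro _
      simp [w_one, Nat.factorization_one]
    · intro a b ha hb hab iha ihb _
      have ha0 : a ≠ 0 := by omega
      have hb0 : b ≠ 0 := by omega
      have h1 : w δ (a * b) ≤ w δ a * w δ b := w_submul hδ (by omega) (by omega)
      have h2 : w δ a * w δ b ≤
          (a.factorization.prod fun p k => w δ (p ^ k)) *
            (b.factorization.prod fun p k => w δ (p ^ k)) := by
        apply mul_le_mul (iha ha0) (ihb hb0) (w_nonneg δ b)
        exact le_trans (w_nonneg δ a) (iha ha0)
      refine h1.trans (h2.trans (le_of_eq ?_))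
      rw [Nat.factorization_mul ha0 hb0, Finsupp.prod_add_index_of_disjoint]
      rw [Nat.support_factorization, Nat.support_factorization]
      exact Nat.Coprime.disjoint_primeFactors (by assumption)
  intro n hn; exact key n hn

lemma F_le_G {h : ℕ → ℝ} (hnonneg : ∀ n, 0 ≤ h n) (hone : h 1 = 1)
    (hmul : ∀ m n : ℕ, Nat.Coprime m n → h (m * n) = h m * h n)
    {δ : ℝ} (hδ : 0 ≤ δ) {n : ℕ} (hn : n ≠ 0) :
    h n * w δ n ≤ G h δ n := by
  rw [G, if_neg hn]
  have hh : h n = n.factorization.prod fun p k => h (p ^ k) :=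
    Nat.multiplicative_factorization h hmul hone hn
  have hprod : (n.factorization.prod fun p k => h (p ^ k) * w δ (p ^ k)) =
      (n.factorization.prod fun p k => h (p ^ k)) *
        (n.factorization.prod fun p k => w δ (p ^ k)) := by
    rw [← Finsupp.prod_mul]
  rw [hprod, ← hh]
  apply mul_le_mul_of_nonneg_left (w_le_prod hδ hn) (hnonneg n)

lemma summable_exp_neg_sqrt {b : ℝ} (hb : 0 < b) :
    Summable (fun j : ℕ => Real.exp (-(b * Real.sqrt (j + 1)))) := by
  have hle : ∀ j : ℕ, Real.exp (-(b * Real.sqrt (j + 1))) ≤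
      (24 / b ^ 4) * (1 / ((j : ℝ) + 1) ^ 2) := by
    intro j
    set x := b * Real.sqrt ((j : ℝ) + 1) with hx
    have hj1 : (0:ℝ) < (j : ℝ) + 1 := by positivity
    have hx0 : 0 < x := by
      apply mul_pos hb (Real.sqrt_pos.mpr hj1)
    have hexp : x ^ 4 / 24 ≤ Real.exp x := by
      calc x ^ 4 / 24 = x ^ 4 / (Nat.factorial 4 : ℝ) := by norm_num [Nat.factorial]
      _ ≤ ∑ i ∈ Finset.range 5, x ^ i / (Nat.factorial i : ℝ) := by
          apply Finset.single_le_sum (f := fun i => x ^ i / (Nat.factorial i : ℝ))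
            (fun i _ => by positivity) (by norm_num)
      _ ≤ Real.exp x := Real.sum_le_exp_of_nonneg hx0.le 5
    have hx4 : x ^ 4 = b ^ 4 * ((j : ℝ) + 1) ^ 2 := by
      have hs : Real.sqrt ((j:ℝ) + 1) ^ 4 = ((j : ℝ) + 1) ^ 2 := by
        rw [show (4:ℕ) = 2 * 2 from rfl, pow_mul, Real.sq_sqrt hj1.le]
      rw [hx, mul_pow, hs]
    have h24 : x ^ 4 / 24 > 0 := by positivity
    rw [Real.exp_neg]
    rw [inv_le_comm₀ (Real.exp_pos x) (by positivity)]
    calc (24 / b ^ 4 * (1 / ((j:ℝ) + 1) ^ 2))⁻¹ = x ^ 4 / 24 := by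
          rw [hx4]; field_simp
    _ ≤ Real.exp x := hexp
  apply Summable.of_nonneg_of_le (fun j => (Real.exp_pos _).le) hle
  apply Summable.mul_left
  have := (summable_nat_add_iff (f := fun n : ℕ => 1 / (n : ℝ) ^ 2) 1).mpr
    (Real.summable_one_div_nat_pow.mpr (by norm_num))
  simpa using this

lemma sum_hw_bounded (h : ℕ → ℝ) (hnonneg : ∀ n, 0 ≤ h n)
    (c C x₀ : ℝ) (hC : 0 < C)
    (hbound : ∀ x ≥ x₀, primeSum h x ≤ C * Real.sqrt x / Real.exp (c * Real.sqrt (Real.log x)))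
    (δ : ℝ) (hδ0 : 0 < δ) (hδc : δ < c) :
    ∃ B : ℝ, ∀ N : ℕ, ∑ p ∈ N.primesBelow, h p * w δ p ≤ B := by
  classical
  set L := Real.log 2 with hLdef
  have hL : 0 < L := Real.log_pos (by norm_num)
  set P₀ : ℕ := max 2 ⌈x₀⌉₊ with hP₀def
  have hP₀x : x₀ ≤ (P₀ : ℝ) := by
    calc x₀ ≤ (⌈x₀⌉₊ : ℝ) := Nat.le_ceil x₀
    _ ≤ (P₀ : ℝ) := by exact_mod_cast Nat.le_max_right 2 ⌈x₀⌉₊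
  set u : ℕ → ℝ := fun j => C * Real.sqrt 2 *
    Real.exp (-((c - δ) * Real.sqrt (((j : ℝ) + 1) * L))) with hudef
  have hupos : ∀ j, 0 < u j := fun j => by
    apply mul_pos (mul_pos hC (Real.sqrt_pos.mpr (by norm_num))) (Real.exp_pos _)
  have husum : Summable u := by
    apply Summable.mul_left
    have key := summable_exp_neg_sqrt (b := (c - δ) * Real.sqrt L)
      (mul_pos (by linarith) (Real.sqrt_pos.mpr hL))
    refine key.congr fun j => ?_
    congr 1
    rw [mul_comm ((j:ℝ) + 1) L, Real.sqrt_mul hL.le]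
    ring
  set B₂ : ℝ := ∑' j, u j with hB₂def
  set B₁ : ℝ := ∑ p ∈ P₀.primesBelow, h p * w δ p with hB₁def
  refine ⟨B₁ + B₂, fun N => ?_⟩
  rw [← Finset.sum_filter_add_sum_filter_not N.primesBelow (fun p => p < P₀)]
  have hterm_nonneg : ∀ p : ℕ, 0 ≤ h p * w δ p := fun p =>
    mul_nonneg (hnonneg p) (w_nonneg δ p)
  apply add_le_add
  · -- small primes
    apply Finset.sum_le_sum_of_subset_of_nonneg
    · intro p hp
      simp only [Finset.mem_filter, Nat.mem_primesBelow] at hp ⊢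
      exact ⟨hp.2, hp.1.2⟩
    · intro p _ _; exact hterm_nonneg p
  · -- large primes, dyadic decomposition
    set S := N.primesBelow.filter (fun p => ¬ p < P₀) with hSdef
    have hmaps : ∀ p ∈ S, Nat.log 2 p ∈ Finset.range N := by
      intro p hp
      simp only [hSdef, Finset.mem_filter, Nat.mem_primesBelow] at hp
      exact Finset.mem_range.mpr (lt_of_le_of_lt (Nat.log_le_self 2 p) hp.1.1)
    rw [← Finset.sum_fiberwise_of_maps_to hmaps (fun p => h p * w δ p)]
    have hfiber : ∀ j ∈ Finset.range N,
        ∑ p ∈ S.filter (fun p => Nat.log 2 p = j), h p * w δ p ≤ u j := by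
      intro j _
      set fib := S.filter (fun p => Nat.log 2 p = j) with hfibdef
      rcases Finset.eq_empty_or_nonempty fib with hfe | ⟨q, hq⟩
      · rw [hfe, Finset.sum_empty]; exact (hupos j).le
      · -- facts about members of the fiber
        have hmem : ∀ p ∈ fib, p.Prime ∧ P₀ ≤ p ∧ 2 ^ j ≤ p ∧ p < 2 ^ (j + 1) := by
          intro p hp
          simp only [hfibdef, hSdef, Finset.mem_filter, Nat.mem_primesBelow] at hp
          obtain ⟨⟨⟨_, hprime⟩, hge⟩, hlog⟩ := hp
          refine ⟨hprime, by omega, ?_, ?_⟩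
          · rw [← hlog]; exact Nat.pow_log_le_self 2 hprime.pos.ne'
          · rw [← hlog]; exact Nat.lt_pow_succ_log_self (by norm_num) p
        set X : ℝ := ((2 ^ (j + 1) : ℕ) : ℝ) with hXdef
        have hX2 : X = (2 : ℝ) ^ (j + 1) := by rw [hXdef]; push_cast; ring
        have hXx₀ : x₀ ≤ X := by
          obtain ⟨_, hq2, _, hq4⟩ := hmem q hq
          calc x₀ ≤ (P₀ : ℝ) := hP₀x
          _ ≤ (q : ℝ) := by exact_mod_cast hq2
          _ ≤ X := by rw [hXdef]; exact_mod_cast hq4.le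
        have hlogX : Real.log X = ((j : ℝ) + 1) * L := by
          rw [hX2, Real.log_pow]; push_cast; ring
        set s := Real.sqrt (((j : ℝ) + 1) * L) with hsdef
        set r := Real.sqrt ((2 : ℝ) ^ j) with hrdef
        have hr : 0 < r := Real.sqrt_pos.mpr (by positivity)
        -- pointwise bound on w
        have hwle : ∀ p ∈ fib, w δ p ≤ Real.exp (δ * s) / r := by
          intro p hp
          obtain ⟨hprime, _, hp3, hp4⟩ := hmem p hp
          have hppos : (0 : ℝ) < p := by exact_mod_cast hprime.pos
          have h1 : Real.log p ≤ ((j : ℝ) + 1) * L := by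
            rw [← hlogX]
            apply Real.log_le_log hppos
            rw [hXdef]; exact_mod_cast hp4.le
          have h2 : (2 : ℝ) ^ j ≤ (p : ℝ) := by exact_mod_cast hp3
          apply div_le_div₀ (Real.exp_pos _).le ?_ hr ?_
          · exact Real.exp_le_exp.mpr
              (mul_le_mul_of_nonneg_left (Real.sqrt_le_sqrt h1) hδ0.le)
          · exact Real.sqrt_le_sqrt h2
        calc ∑ p ∈ fib, h p * w δ p
            ≤ ∑ p ∈ fib, h p * (Real.exp (δ * s) / r) := by
              apply Finset.sum_le_sum
              intro p hp
              exact mul_le_mul_of_nonneg_left (hwle p hp) (hnonneg p)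
        _ = (∑ p ∈ fib, h p) * (Real.exp (δ * s) / r) := by
              rw [Finset.sum_mul]
        _ ≤ (C * Real.sqrt X / Real.exp (c * s)) * (Real.exp (δ * s) / r) := by
              apply mul_le_mul_of_nonneg_right ?_ (by positivity)
              have hsub : ∑ p ∈ fib, h p ≤ primeSum h X := by
                unfold primeSum
                apply Finset.sum_le_sum_of_subset_of_nonneg
                · intro p hp
                  obtain ⟨hprime, _, _, hp4⟩ := hmem p hp
                  simp only [Finset.mem_filter, Finset.mem_Icc]
                  rw [hXdef, Nat.floor_natCast]
                  exact ⟨⟨hprime.one_lt.le, hp4.le⟩, hprime⟩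
                · intro p _ _; exact hnonneg p
              refine hsub.trans ?_
              have := hbound X hXx₀
              rwa [hlogX, ← hsdef] at this
        _ = u j := by
              have hsqrtX : Real.sqrt X = Real.sqrt 2 * r := by
                rw [hX2, pow_succ, mul_comm ((2:ℝ)^j) 2, Real.sqrt_mul (by norm_num), hrdef]
              have huj : u j = C * Real.sqrt 2 * Real.exp (-((c - δ) * s)) := rfl
              have he1 : Real.exp (c * s) ≠ 0 := Real.exp_ne_zero _
              rw [hsqrtX, huj, show -((c - δ) * s) = δ * s - c * s by ring, Real.exp_sub]
              field_simp
    calc ∑ j ∈ Finset.range N, ∑ p ∈ S.filter (fun p => Nat.log 2 p = j), h p * w δ p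
        ≤ ∑ j ∈ Finset.range N, u j := Finset.sum_le_sum hfiber
    _ ≤ B₂ := Summable.sum_le_tsum _ (fun j _ => (hupos j).le) husum

/-- For primes that are at least `16` and at least `exp (16 δ²)`, we have `w δ p ≤ 1/2`. -/
lemma w_le_half {δ : ℝ} (hδ0 : 0 < δ) {p : ℕ} (hp : p.Prime)
    (h16 : 16 ≤ p) (hbig : Real.exp (16 * δ ^ 2) ≤ (p : ℝ)) :
    w δ p ≤ 1 / 2 := by
  have hppos : (0 : ℝ) < p := by exact_mod_cast hp.pos
  set lp := Real.log p with hlp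
  have hlp16 : 16 * δ ^ 2 ≤ lp := by
    rw [hlp, ← Real.log_exp (16 * δ ^ 2)]
    exact Real.log_le_log (Real.exp_pos _) hbig
  have hlppos : 0 < lp := lt_of_lt_of_le (by positivity) hlp16
  have hδle : δ * Real.sqrt lp ≤ lp / 4 := by
    have h1 : δ ≤ Real.sqrt lp / 4 := by
      have := Real.sqrt_le_sqrt hlp16
      rw [show 16 * δ ^ 2 = (4 * δ) ^ 2 by ring, Real.sqrt_sq (by positivity)] at this
      linarith
    calc δ * Real.sqrt lp ≤ (Real.sqrt lp / 4) * Real.sqrt lp :=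
          mul_le_mul_of_nonneg_right h1 (Real.sqrt_nonneg _)
    _ = (Real.sqrt lp * Real.sqrt lp) / 4 := by ring
    _ = lp / 4 := by rw [Real.mul_self_sqrt hlppos.le]
  have hsqrtp : Real.sqrt p = Real.exp (lp / 2) := by
    rw [show (p : ℝ) = Real.exp lp from (Real.exp_log hppos).symm, Real.sqrt_eq_rpow,
      ← Real.exp_mul]
    ring_nf
  have hlp2 : Real.log 2 ≤ lp / 4 := by
    have h1 : Real.log 16 ≤ lp := Real.log_le_log (by norm_num) (by exact_mod_cast h16)
    have h2 : Real.log 16 = 4 * Real.log 2 := by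
      rw [show (16 : ℝ) = 2 ^ 4 by norm_num, Real.log_pow]; push_cast; ring
    linarith
  calc w δ p = Real.exp (δ * Real.sqrt lp) / Real.sqrt p := rfl
  _ ≤ Real.exp (lp / 4) / Real.exp (lp / 2) := by
      rw [hsqrtp]
      exact div_le_div₀ (Real.exp_pos _).le (Real.exp_le_exp.mpr hδle)
        (Real.exp_pos _) le_rfl
  _ = Real.exp (lp / 4 - lp / 2) := (Real.exp_sub _ _).symm
  _ ≤ Real.exp (- Real.log 2) := Real.exp_le_exp.mpr (by linarith)
  _ = 1 / 2 := by rw [Real.exp_neg, Real.exp_log (by norm_num)]; norm_num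

/-- The sum over primes of the local Euler-factor tails is uniformly bounded. -/
lemma sum_T_bounded (h : ℕ → ℝ) (hnonneg : ∀ n, 0 ≤ h n)
    (c C x₀ : ℝ) (hC : 0 < C)
    (hbound : ∀ x ≥ x₀, primeSum h x ≤ C * Real.sqrt x / Real.exp (c * Real.sqrt (Real.log x)))
    (δ : ℝ) (hδ0 : 0 < δ) (hδc : δ < c)
    (hw1 : ∀ p : ℕ, p.Prime → w δ p < 1) :
    ∃ B : ℝ, ∀ N : ℕ,
      ∑ p ∈ N.primesBelow, h p * (w δ p * (1 - w δ p)⁻¹) ≤ B := by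
  classical
  obtain ⟨B₂, hB₂⟩ := sum_hw_bounded h hnonneg c C x₀ hC hbound δ hδ0 hδc
  set T : ℕ → ℝ := fun p => h p * (w δ p * (1 - w δ p)⁻¹) with hTdef
  have hTnonneg : ∀ p : ℕ, p.Prime → 0 ≤ T p := by
    intro p hp
    have h1 : 0 < 1 - w δ p := by linarith [hw1 p hp]
    exact mul_nonneg (hnonneg p) (mul_nonneg (w_nonneg δ p) (inv_nonneg.mpr h1.le))
  set P₁ : ℕ := max 16 ⌈Real.exp (16 * δ ^ 2)⌉₊ with hP₁def
  set B₁ : ℝ := ∑ p ∈ P₁.primesBelow, T p with hB₁def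
  refine ⟨B₁ + 2 * B₂, fun N => ?_⟩
  rw [← Finset.sum_filter_add_sum_filter_not N.primesBelow (fun p => p < P₁)]
  apply add_le_add
  · apply Finset.sum_le_sum_of_subset_of_nonneg
    · intro p hp
      simp only [Finset.mem_filter, Nat.mem_primesBelow] at hp ⊢
      exact ⟨hp.2, hp.1.2⟩
    · intro p hp _
      exact hTnonneg p (Nat.prime_of_mem_primesBelow hp)
  · have hstep : ∀ p ∈ N.primesBelow.filter (fun p => ¬ p < P₁),
        T p ≤ 2 * (h p * w δ p) := by
      intro p hp
      simp only [Finset.mem_filter, Nat.mem_primesBelow] at hp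
      obtain ⟨⟨_, hprime⟩, hge⟩ := hp
      have hp1 : P₁ ≤ p := Nat.not_lt.mp hge
      have h16 : 16 ≤ p := le_trans (le_trans (Nat.le_max_left _ _) hP₁def.ge) hp1
      have hbig : Real.exp (16 * δ ^ 2) ≤ (p : ℝ) := by
        calc Real.exp (16 * δ ^ 2) ≤ (⌈Real.exp (16 * δ ^ 2)⌉₊ : ℝ) := Nat.le_ceil _
        _ ≤ (p : ℝ) := by
            have : ⌈Real.exp (16 * δ ^ 2)⌉₊ ≤ p :=
              le_trans (le_trans (Nat.le_max_right 16 _) hP₁def.ge) hp1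
            exact_mod_cast this
      have hhalf : w δ p ≤ 1 / 2 := w_le_half hδ0 hprime h16 hbig
      have h1 : (1 : ℝ) / 2 ≤ 1 - w δ p := by linarith
      have h2 : (1 - w δ p)⁻¹ ≤ 2 := by
        rw [show (2 : ℝ) = ((1:ℝ)/2)⁻¹ by norm_num]
        exact inv_anti₀ (by norm_num) h1
      calc T p = h p * (w δ p * (1 - w δ p)⁻¹) := rfl
      _ ≤ h p * (w δ p * 2) :=
          mul_le_mul_of_nonneg_left
            (mul_le_mul_of_nonneg_left h2 (w_nonneg δ p)) (hnonneg p)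
      _ = 2 * (h p * w δ p) := by ring
    calc ∑ p ∈ N.primesBelow.filter (fun p => ¬ p < P₁), T p
        ≤ ∑ p ∈ N.primesBelow.filter (fun p => ¬ p < P₁), 2 * (h p * w δ p) :=
          Finset.sum_le_sum hstep
    _ ≤ ∑ p ∈ N.primesBelow, 2 * (h p * w δ p) := by
          apply Finset.sum_le_sum_of_subset_of_nonneg (Finset.filter_subset _ _)
          intro p _ _
          exact mul_nonneg (by norm_num) (mul_nonneg (hnonneg p) (w_nonneg δ p))
    _ = 2 * ∑ p ∈ N.primesBelow, h p * w δ p := by rw [Finset.mul_sum]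
    _ ≤ 2 * B₂ := by linarith [hB₂ N]

lemma local_factor (h : ℕ → ℝ) (hnonneg : ∀ n, 0 ≤ h n) (hone : h 1 = 1)
    (hpk' : ∀ p k : ℕ, p.Prime → 1 ≤ k → h (p ^ k) ≤ h p)
    {δ : ℝ} (hδ : 0 ≤ δ) {p : ℕ} (hp : p.Prime) (hwp1 : w δ p < 1) :
    Summable (fun k : ℕ => G h δ (p ^ k)) ∧
      ∑' k : ℕ, G h δ (p ^ k) ≤ 1 + h p * (w δ p * (1 - w δ p)⁻¹) := by
  set wp := w δ p with hwpdef
  have hwp0 : 0 ≤ wp := w_nonneg δ p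
  have hGpk : ∀ k : ℕ, G h δ (p ^ k) = if k = 0 then 1 else h (p ^ k) * w δ (p ^ k) :=
    G_prime_pow hone hp
  have hbnd : ∀ k : ℕ, G h δ (p ^ k) ≤ (1 + h p) * wp ^ k := by
    intro k
    rw [hGpk k]
    cases k with
    | zero => simp [le_add_iff_nonneg_right, hnonneg p]
    | succ k =>
      simp only [Nat.succ_ne_zero, if_false]
      calc h (p ^ (k + 1)) * w δ (p ^ (k + 1))
          ≤ h p * wp ^ (k + 1) := by
            apply mul_le_mul (hpk' p (k+1) hp (by omega))
              (w_pow_le hδ hp.one_lt.le (k+1)) (w_nonneg δ _)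
              (hnonneg p)
      _ ≤ (1 + h p) * wp ^ (k + 1) := by
            apply mul_le_mul_of_nonneg_right (by linarith) (by positivity)
  have hGnn : ∀ k : ℕ, 0 ≤ G h δ (p ^ k) := fun k => G_nonneg hnonneg δ _
  have hsum : Summable (fun k : ℕ => G h δ (p ^ k)) := by
    apply Summable.of_nonneg_of_le hGnn hbnd
    exact (summable_geometric_of_lt_one hwp0 hwp1).mul_left _
  refine ⟨hsum, ?_⟩
  rw [Summable.tsum_eq_zero_add hsum]
  have h0 : G h δ (p ^ 0) = 1 := by rw [hGpk 0]; simp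
  rw [h0]
  apply add_le_add_right
  have htail_le : ∀ k : ℕ, G h δ (p ^ (k + 1)) ≤ h p * (wp * wp ^ k) := by
    intro k
    rw [hGpk (k + 1)]
    simp only [Nat.succ_ne_zero, if_false]
    calc h (p ^ (k + 1)) * w δ (p ^ (k + 1))
        ≤ h p * wp ^ (k + 1) := by
          apply mul_le_mul (hpk' p (k+1) hp (by omega))
            (w_pow_le hδ hp.one_lt.le (k+1)) (w_nonneg δ _) (hnonneg p)
    _ = h p * (wp * wp ^ k) := by rw [pow_succ']
  have hgeo : Summable (fun k : ℕ => h p * (wp * wp ^ k)) := by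
    exact (((summable_geometric_of_lt_one hwp0 hwp1).mul_left wp).mul_left (h p))
  calc ∑' k : ℕ, G h δ (p ^ (k + 1))
      ≤ ∑' k : ℕ, h p * (wp * wp ^ k) := by
        apply Summable.tsum_le_tsum htail_le ?_ hgeo
        exact Summable.of_nonneg_of_le (fun k => hGnn (k + 1)) htail_le hgeo
  _ = h p * (wp * ∑' k : ℕ, wp ^ k) := by rw [tsum_mul_left, tsum_mul_left]
  _ = h p * (wp * (1 - wp)⁻¹) := by rw [tsum_geometric_of_lt_one hwp0 hwp1]

end SeriesConvAux

theorem series_converges (h : ℕ → ℝ) (hnonneg : ∀ n, 0 ≤ h n)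
    (hone : h 1 = 1)
    (hmul : ∀ m n : ℕ, Nat.Coprime m n → h (m * n) = h m * h n)
    (hp2 : ∀ p : ℕ, p.Prime → h p ≤ 2)
    (hpk : ∀ p k : ℕ, p.Prime → 2 ≤ k → h (p ^ k) ≤ h p)
    (c : ℝ) (hc : 0 < c)
    (hbound : ∃ C > 0, ∃ x₀ : ℝ, ∀ x ≥ x₀,
      primeSum h x ≤ C * Real.sqrt x / Real.exp (c * Real.sqrt (Real.log x)))
    (δ : ℝ) (hδ0 : 0 < δ) (hδc : δ < c / 2)
    (hδsmall : ∀ p : ℕ, p.Prime →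
      Real.exp (δ * Real.sqrt (Real.log p)) < Real.sqrt p) :
    Summable (fun n : ℕ =>
      h (n + 1) * Real.exp (δ * Real.sqrt (Real.log (n + 1))) / Real.sqrt (n + 1)) := by
  classical
  open SeriesConvAux in
  obtain ⟨C, hC, x₀, hbd⟩ := hbound
  have hδle : (0:ℝ) ≤ δ := hδ0.le
  have hw1 : ∀ p : ℕ, p.Prime → w δ p < 1 := by
    intro p hp
    have hsp : 0 < Real.sqrt p := Real.sqrt_pos.mpr (by exact_mod_cast hp.pos)
    rw [w, div_lt_one hsp]
    exact hδsmall p hp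
  have hpk' : ∀ p k : ℕ, p.Prime → 1 ≤ k → h (p ^ k) ≤ h p := by
    intro p k hp hk
    rcases Nat.lt_or_ge k 2 with h2 | h2
    · have hk1 : k = 1 := by omega
      subst hk1; rw [pow_one]
    · exact hpk p k hp h2
  have hδc' : δ < c := by linarith
  obtain ⟨B, hB⟩ := sum_T_bounded h hnonneg c C x₀ hC hbd δ hδ0 hδc' hw1
  have G1 : G h δ 1 = 1 := G_one h δ
  have Gmul : ∀ {m n : ℕ}, Nat.Coprime m n → G h δ (m * n) = G h δ m * G h δ n :=
    fun hmn => G_mul h δ hmn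
  have Ghsum : ∀ {p : ℕ}, p.Prime → Summable (fun n : ℕ => ‖G h δ (p ^ n)‖) := by
    intro p hp
    refine ((local_factor h hnonneg hone hpk' hδle hp (hw1 p hp)).1).congr fun k => ?_
    rw [Real.norm_eq_abs, abs_of_nonneg (G_nonneg hnonneg δ _)]
  apply summable_of_sum_range_le (c := Real.exp B)
  · intro n
    exact div_nonneg (mul_nonneg (hnonneg _) (Real.exp_pos _).le) (Real.sqrt_nonneg _)
  · intro N
    have hterm : ∀ n : ℕ,
        h (n + 1) * Real.exp (δ * Real.sqrt (Real.log ((n:ℝ) + 1))) / Real.sqrt ((n:ℝ) + 1)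
          = h (n + 1) * w δ (n + 1) := by
      intro n
      rw [w]
      push_cast
      ring
    obtain ⟨hsummableG, hhasSum⟩ :=
      EulerProduct.summable_and_hasSum_smoothNumbers_prod_primesBelow_tsum
        (f := G h δ) G1 Gmul Ghsum (N + 1)
    have hmemsm : ∀ m ∈ Finset.Icc 1 N, m ∈ (N + 1).smoothNumbers := by
      intro m hm
      rw [Finset.mem_Icc] at hm
      exact Nat.mem_smoothNumbers_of_lt (by omega) (by omega)
    set emb : {x // x ∈ Finset.Icc 1 N} ↪ (N + 1).smoothNumbers :=
      ⟨fun x => ⟨x.1, hmemsm x.1 x.2⟩, by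
        intro a b hab
        exact Subtype.ext (by simpa using congrArg Subtype.val hab)⟩ with hembdef
    have hTp_nonneg : ∀ p ∈ (N + 1).primesBelow,
        0 ≤ h p * (w δ p * (1 - w δ p)⁻¹) := by
      intro p hp
      have hp' := Nat.prime_of_mem_primesBelow hp
      have : 0 < 1 - w δ p := by linarith [hw1 p hp']
      exact mul_nonneg (hnonneg p) (mul_nonneg (w_nonneg δ p) (by positivity))
    calc ∑ n ∈ Finset.range N,
          h (n + 1) * Real.exp (δ * Real.sqrt (Real.log ((n:ℝ) + 1))) / Real.sqrt ((n:ℝ) + 1)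
        = ∑ n ∈ Finset.range N, h (n + 1) * w δ (n + 1) :=
          Finset.sum_congr rfl fun n _ => hterm n
    _ ≤ ∑ n ∈ Finset.range N, G h δ (n + 1) :=
          Finset.sum_le_sum fun n _ =>
            F_le_G hnonneg hone hmul hδle (Nat.succ_ne_zero n)
    _ = ∑ m ∈ Finset.Icc 1 N, G h δ m := by
          rw [← Finset.Ico_add_one_right_eq_Icc, Finset.sum_Ico_eq_sum_range,
            show N + 1 - 1 = N from rfl]
          exact Finset.sum_congr rfl fun i _ => by rw [add_comm]
    _ = ∑ y ∈ (Finset.Icc 1 N).attach.map emb, G h δ y := by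
          rw [Finset.sum_map]
          simp only [hembdef, Function.Embedding.coeFn_mk]
          exact (Finset.sum_attach _ _).symm
    _ ≤ ∏ p ∈ (N + 1).primesBelow, ∑' k : ℕ, G h δ (p ^ k) :=
          sum_le_hasSum _ (fun i _ => G_nonneg hnonneg δ i.1) hhasSum
    _ ≤ ∏ p ∈ (N + 1).primesBelow, Real.exp (h p * (w δ p * (1 - w δ p)⁻¹)) := by
          apply Finset.prod_le_prod
          · intro p _
            exact tsum_nonneg fun k => G_nonneg hnonneg δ _
          · intro p hp
            have hp' := Nat.prime_of_mem_primesBelow hp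
            refine ((local_factor h hnonneg hone hpk' hδle hp' (hw1 p hp')).2).trans ?_
            have := Real.add_one_le_exp (h p * (w δ p * (1 - w δ p)⁻¹))
            linarith
    _ = Real.exp (∑ p ∈ (N + 1).primesBelow, h p * (w δ p * (1 - w δ p)⁻¹)) :=
          (Real.exp_sum _ _).symm
    _ ≤ Real.exp B := Real.exp_le_exp.mpr (hB (N + 1))
end
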